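/- Let m ≥ 1 and zⱼ = r₀(cos(π(j-1)/m), sin(π(j-1)/m), 0) ∈ ℝ³, r₀ > 0, j = 1, …, 2m. Then the function ψ(x) = -(1/(4π)) ∑_{j=1}^{2m} (-1)^{j+1}/|x - zⱼ| satisfies ψ(x) = O(1/|x|^{m+1}) as |x| → ∞. -/

import Mathlib

open Real

/-- The point (a, b, c) of Euclidean 3-space. -/
noncomputable def pt3 (a b c : ℝ) : EuclideanSpace ℝ (Fin 3) :=
  (WithLp.equiv 2 (Fin 3 → ℝ)).symm ![a, b, c]

open Set

noncomputable def cc : ℕ → ℝ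
  | 0 => 1
  | (k+1) => cc k * (k + 1/2)

lemma cc_nonneg (k : ℕ) : 0 ≤ cc k := by
  induction k with
  | zero => norm_num [cc]
  | succ k ih => rw [cc]; positivity

lemma cc_le_factorial (k : ℕ) : cc k ≤ (k.factorial : ℝ) := by
  induction k with
  | zero => norm_num [cc]
  | succ k ih =>
    rw [cc, Nat.factorial_succ]
    push_cast
    have h0 := cc_nonneg k
    nlinarith [(by exact_mod_cast Nat.one_le_iff_ne_zero.mpr (Nat.factorial_ne_zero k) : (1:ℝ) ≤ k.factorial)]

lemma key_deriv (u : ℝ) (hu : |u| ≤ 1/2) (k : ℕ) :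
    ∀ t ∈ Icc (0:ℝ) 1, iteratedDerivWithin k (fun t : ℝ => (1 - t*u) ^ (-(1/2) : ℝ))
      (Icc 0 1) t = cc k * u ^ k * (1 - t*u) ^ (-(1/2) - (k:ℝ)) := by
  have hpos : ∀ t ∈ Icc (0:ℝ) 1, (1:ℝ)/2 ≤ 1 - t*u := by
    intro t ht
    have h1 : t * u ≤ |u| := by
      rcases ht with ⟨h0, h1⟩
      calc t * u ≤ t * |u| := by nlinarith [le_abs_self u]
        _ ≤ 1 * |u| := by nlinarith [abs_nonneg u]
        _ = |u| := one_mul _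
    linarith
  induction k with
  | zero =>
    intro t ht
    simp [cc]
  | succ k ih =>
    intro t ht
    have hud : UniqueDiffOn ℝ (Icc (0:ℝ) 1) := uniqueDiffOn_Icc (by norm_num)
    rw [iteratedDerivWithin_succ]
    rw [derivWithin_congr ih (ih t ht)]
    have hb : (1 - t*u) ≠ 0 := by have := hpos t ht; linarith
    have h1 : HasDerivAt (fun s : ℝ => 1 - s*u) (-u) t := by
      simpa using ((hasDerivAt_id t).mul_const u).const_sub 1
    have h2 := (Real.hasDerivAt_rpow_const (p := -(1/2) - (k:ℝ)) (Or.inl hb)).comp t h1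
    have h3 : HasDerivAt (fun x : ℝ => cc k * u ^ k * (1 - x*u) ^ (-(1/2) - (k:ℝ)))
        (cc k * u ^ k * ((-(1/2) - (k:ℝ)) * (1 - t*u) ^ (-(1/2) - (k:ℝ) - 1) * -u)) t :=
      h2.const_mul (cc k * u ^ k)
    rw [(h3.hasDerivWithinAt).derivWithin (hud t ht)]
    have hcast : (-(1/2) - (k:ℝ)) - 1 = -(1/2) - ((k+1 : ℕ) : ℝ) := by push_cast; ring
    rw [cc, hcast]
    ring

lemma taylor_bound (m : ℕ) (hm : 1 ≤ m) (u : ℝ) (hu : |u| ≤ 1/2) :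
    |(1-u) ^ (-(1/2):ℝ) - ∑ k ∈ Finset.range m, cc k / (k.factorial : ℝ) * u ^ k|
      ≤ 2^(m+1) * |u|^m := by
  have hpos : ∀ t ∈ Icc (0:ℝ) 1, (1:ℝ)/2 ≤ 1 - t*u := by
    intro t ht
    have h1 : t * u ≤ |u| := by
      rcases ht with ⟨h0, h1⟩
      calc t * u ≤ t * |u| := by nlinarith [le_abs_self u]
        _ ≤ 1 * |u| := by nlinarith [abs_nonneg u]
        _ = |u| := one_mul _
    linarith
  set φ : ℝ → ℝ := fun t => (1 - t*u) ^ (-(1/2) : ℝ) with hφ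
  have hud : UniqueDiffOn ℝ (Icc (0:ℝ) 1) := uniqueDiffOn_Icc (by norm_num)
  have hsm : ∀ n : ℕ, ContDiffOn ℝ n φ (Icc 0 1) := by
    intro n t ht
    have hb : (1 - t*u) ≠ 0 := by have := hpos t ht; linarith
    have h1 : ContDiffAt ℝ n (fun s : ℝ => 1 - s*u) t :=
      (contDiff_const.sub (contDiff_id.mul contDiff_const)).contDiffAt
    exact ((Real.contDiffAt_rpow_const_of_ne hb).comp t h1).contDiffWithinAt
  have hf' : DifferentiableOn ℝ (iteratedDerivWithin (m-1) φ (Icc 0 1)) (Ioo 0 1) := by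
    have hD : DifferentiableOn ℝ
        (fun t => cc (m-1) * u ^ (m-1) * (1 - t*u) ^ (-(1/2) - ((m-1 : ℕ):ℝ))) (Ioo 0 1) := by
      intro t ht
      have ht' : t ∈ Icc (0:ℝ) 1 := Ioo_subset_Icc_self ht
      have hb : (1 - t*u) ≠ 0 := by have := hpos t ht'; linarith
      have h1 : HasDerivAt (fun s : ℝ => 1 - s*u) (-u) t := by
        simpa using ((hasDerivAt_id t).mul_const u).const_sub 1
      have h2 := (Real.hasDerivAt_rpow_const (p := -(1/2) - ((m-1:ℕ):ℝ)) (Or.inl hb)).comp t h1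
      have h3 : HasDerivAt (fun x : ℝ => cc (m-1) * u ^ (m-1) * (1 - x*u) ^ (-(1/2) - ((m-1:ℕ):ℝ)))
          (cc (m-1) * u ^ (m-1) * ((-(1/2) - ((m-1:ℕ):ℝ)) * (1 - t*u) ^ (-(1/2) - ((m-1:ℕ):ℝ) - 1) * -u)) t :=
        h2.const_mul _
      exact h3.differentiableAt.differentiableWithinAt
    exact hD.congr (fun t ht => key_deriv u hu (m-1) t (Ioo_subset_Icc_self ht))
  obtain ⟨ξ, hξ, hrem⟩ := taylor_mean_remainder_lagrange (f := φ) (x₀ := 0) (x := 1)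
    (n := m-1) (by norm_num) (by rw [uIcc_of_le (by norm_num)]; exact hsm (m-1))
    (by rw [uIcc_of_le (by norm_num), uIoo_of_le (by norm_num)]; exact hf')
  rw [uIcc_of_le (by norm_num : (0:ℝ) ≤ 1)] at hrem
  rw [uIoo_of_le (by norm_num : (0:ℝ) ≤ 1)] at hξ
  have hm1 : m - 1 + 1 = m := Nat.succ_pred_eq_of_pos hm
  rw [hm1] at hrem
  have hT : taylorWithinEval φ (m-1) (Icc 0 1) 0 1
      = ∑ k ∈ Finset.range m, cc k / (k.factorial : ℝ) * u ^ k := by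
    rw [taylor_within_apply, hm1]
    apply Finset.sum_congr rfl
    intro k hk
    rw [key_deriv u hu k 0 (by norm_num)]
    simp
    ring
  have hφ1 : φ 1 = (1-u) ^ (-(1/2):ℝ) := by simp [hφ]
  rw [hT, hφ1] at hrem
  rw [hrem, key_deriv u hu m ξ (Ioo_subset_Icc_self hξ)]
  have hb1 : (1:ℝ)/2 ≤ 1 - ξ*u := hpos ξ (Ioo_subset_Icc_self hξ)
  have hrpos : (0:ℝ) < (1 - ξ*u) ^ (-(1/2) - (m:ℝ)) := Real.rpow_pos_of_pos (by linarith) _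
  have hbound : (1 - ξ*u) ^ (-(1/2) - (m:ℝ)) ≤ 2^(m+1) := by
    have h1 : (1 - ξ*u) ^ (-(1/2) - (m:ℝ)) ≤ ((1:ℝ)/2) ^ (-(1/2) - (m:ℝ)) := by
      apply Real.rpow_le_rpow_of_nonpos (by norm_num) hb1
      have : (0:ℝ) ≤ (m:ℝ) := Nat.cast_nonneg m
      linarith
    have h2 : ((1:ℝ)/2) ^ (-(1/2) - (m:ℝ)) = (2:ℝ) ^ ((1/2) + (m:ℝ)) := by
      rw [one_div, Real.inv_rpow (by norm_num : (0:ℝ) ≤ 2),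
        ← Real.rpow_neg (by norm_num : (0:ℝ) ≤ 2)]
      congr 1
      ring
    have h3 : (2:ℝ) ^ ((1/2) + (m:ℝ)) ≤ (2:ℝ) ^ (((m+1 : ℕ)) : ℝ) := by
      apply Real.rpow_le_rpow_of_exponent_le (by norm_num)
      push_cast; linarith
    rw [Real.rpow_natCast] at h3
    calc (1 - ξ*u) ^ (-(1/2) - (m:ℝ)) ≤ ((1:ℝ)/2) ^ (-(1/2) - (m:ℝ)) := h1
      _ = (2:ℝ) ^ ((1/2) + (m:ℝ)) := h2
      _ ≤ 2^(m+1) := h3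
  have hcc : cc m ≤ (m.factorial : ℝ) := cc_le_factorial m
  have hfac : (0:ℝ) < (m.factorial : ℝ) := by exact_mod_cast Nat.factorial_pos m
  simp only [sub_zero, one_pow, mul_one]
  rw [abs_div, abs_mul, abs_mul, abs_pow, abs_of_nonneg (cc_nonneg m), abs_of_pos hrpos,
    abs_of_pos hfac, div_le_iff₀ hfac]
  have hum : (0:ℝ) ≤ |u|^m := pow_nonneg (abs_nonneg u) m
  have h2p : (0:ℝ) < (2:ℝ)^(m+1) := by positivity
  nlinarith [mul_le_mul hcc hbound hrpos.le hfac.le, mul_le_mul_of_nonneg_left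
    (mul_le_mul hcc hbound hrpos.le hfac.le) hum]


lemma moment_sum (m : ℕ) (hm : 1 ≤ m) (p q : ℝ) (k : ℕ) (hk : k < m) :
    ∑ i ∈ Finset.range (2*m), (-1:ℝ)^i *
      (p * Real.cos (π*i/m) + q * Real.sin (π*i/m))^k = 0 := by
  have hm0 : (m:ℝ) ≠ 0 := by positivity
  set η : ℂ := Complex.exp ((π/(m:ℝ) : ℝ) * Complex.I) with hη
  set ξc : ℂ := Complex.exp ((-(π/(m:ℝ)) : ℝ) * Complex.I) with hξc
  set w₁ : ℂ := (p:ℂ) - q * Complex.I with hw₁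
  set w₂ : ℂ := (p:ℂ) + q * Complex.I with hw₂
  have hηi : ∀ i : ℕ, η^i = Complex.exp ((π*i/m : ℝ) * Complex.I) := by
    intro i
    rw [hη, ← Complex.exp_nat_mul]
    congr 1
    push_cast
    ring
  have hξi : ∀ i : ℕ, ξc^i = Complex.exp ((-(π*i/m) : ℝ) * Complex.I) := by
    intro i
    rw [hξc, ← Complex.exp_nat_mul]
    congr 1
    push_cast
    ring
  have step1 : ∀ i : ℕ, ((p * Real.cos (π*i/m) + q * Real.sin (π*i/m) : ℝ) : ℂ)
      = (w₁ * η^i + w₂ * ξc^i)/2 := by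
    intro i
    rw [hηi i, hξi i, Complex.ofReal_neg, Complex.exp_mul_I, Complex.exp_mul_I,
      Complex.cos_neg, Complex.sin_neg, ← Complex.ofReal_cos, ← Complex.ofReal_sin]
    set cθ := Real.cos (π*i/m)
    set sθ := Real.sin (π*i/m)
    rw [hw₁, hw₂, Complex.ofReal_add, Complex.ofReal_mul, Complex.ofReal_mul]
    linear_combination ((q:ℂ)*(sθ:ℂ)) * Complex.I_sq
  have hηm : η^m = -1 := by
    rw [hηi m]
    have h : (π*m/m : ℝ) = π := by field_simp
    rw [h]
    exact Complex.exp_pi_mul_I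
  have geo : ∀ j ∈ Finset.range (k+1),
      ∑ i ∈ Finset.range (2*m), (η^(m+j) * ξc^(k-j))^i = 0 := by
    intro j hj
    have hjk : j ≤ k := Nat.lt_succ_iff.mp (Finset.mem_range.mp hj)
    set s : ℕ := m + j - (k - j) with hs
    have hs1 : 1 ≤ s := by omega
    have hs2 : s < 2*m := by omega
    have hx : η^(m+j) * ξc^(k-j) = Complex.exp ((s:ℂ) * ((π/(m:ℝ) : ℝ) * Complex.I)) := by
      rw [hη, hξc, ← Complex.exp_nat_mul, ← Complex.exp_nat_mul, ← Complex.exp_add]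
      congr 1
      have hcast : ((s:ℕ):ℂ) = ((m+j:ℕ):ℂ) - ((k-j:ℕ):ℂ) := by
        rw [hs, Nat.cast_sub (by omega)]
      rw [hcast]
      push_cast
      ring
    have harg : ((2*m:ℕ):ℂ) * ((s:ℂ) * ((π/(m:ℝ) : ℝ) * Complex.I)) = (s:ℂ) * (2*(π:ℂ)*Complex.I) := by
      have hmC : ((m:ℕ):ℂ) ≠ 0 := Nat.cast_ne_zero.mpr (by omega)
      push_cast
      field_simp
    have hx2m : (η^(m+j) * ξc^(k-j))^(2*m) = 1 := by
      rw [hx, ← Complex.exp_nat_mul, harg, Complex.exp_nat_mul, Complex.exp_two_pi_mul_I, one_pow]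
    have hx1 : η^(m+j) * ξc^(k-j) ≠ 1 := by
      rw [hx]
      intro h
      rw [Complex.exp_eq_one_iff] at h
      obtain ⟨n, hn⟩ := h
      have hI : ((s:ℂ) * (π/(m:ℝ) : ℝ)) * Complex.I = ((n:ℂ) * (2*((π:ℝ):ℂ))) * Complex.I := by
        linear_combination hn
      have h2 : ((s:ℂ) * (π/(m:ℝ) : ℝ)) = (n:ℂ) * (2*((π:ℝ):ℂ)) :=
        mul_right_cancel₀ Complex.I_ne_zero hI
      have h3 : (s:ℝ) * (π/(m:ℝ)) = (n:ℝ) * (2*π) := by exact_mod_cast h2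
      have hπ : (π:ℝ) ≠ 0 := Real.pi_ne_zero
      have h4 : (s:ℝ) = 2*(n:ℝ)*(m:ℝ) := by
        field_simp at h3
        linear_combination h3
      have h5 : (s:ℤ) = 2*n*m := by exact_mod_cast h4
      have hs1' : (1:ℤ) ≤ (s:ℤ) := by exact_mod_cast hs1
      have hs2' : (s:ℤ) < 2*(m:ℤ) := by exact_mod_cast hs2
      have hm' : (1:ℤ) ≤ (m:ℤ) := by exact_mod_cast hm
      rcases le_or_gt n 0 with hn0 | hn0
      · nlinarith
      · have : (1:ℤ) ≤ n := hn0
        nlinarith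
    rw [geom_sum_eq hx1, hx2m]
    simp
  -- main complex computation
  have main : ∑ i ∈ Finset.range (2*m), (-1:ℂ)^i * ((w₁ * η^i + w₂ * ξc^i)/2)^k = 0 := by
    have expand : ∀ i ∈ Finset.range (2*m), (-1:ℂ)^i * ((w₁ * η^i + w₂ * ξc^i)/2)^k
        = ∑ j ∈ Finset.range (k+1),
          (w₁^j * w₂^(k-j) * (k.choose j : ℂ) / 2^k) * (η^(m+j) * ξc^(k-j))^i := by
      intro i _
      rw [div_pow, add_pow, Finset.sum_div, Finset.mul_sum]
      refine Finset.sum_congr rfl fun j hj => ?_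
      rw [← hηm]
      simp only [mul_pow, ← pow_mul]
      ring
    rw [Finset.sum_congr rfl expand, Finset.sum_comm]
    refine Finset.sum_eq_zero fun j hj => ?_
    rw [← Finset.mul_sum, geo j hj, mul_zero]
  -- descend to ℝ
  have cast_eq : ((∑ i ∈ Finset.range (2*m), (-1:ℝ)^i *
      (p * Real.cos (π*i/m) + q * Real.sin (π*i/m))^k : ℝ) : ℂ)
      = ∑ i ∈ Finset.range (2*m), (-1:ℂ)^i * ((w₁ * η^i + w₂ * ξc^i)/2)^k := by
    rw [Complex.ofReal_sum]
    refine Finset.sum_congr rfl fun i _ => ?_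
    rw [Complex.ofReal_mul, Complex.ofReal_pow, Complex.ofReal_pow, step1 i,
      Complex.ofReal_neg, Complex.ofReal_one]
  have := cast_eq.trans main
  exact_mod_cast this




/-- the alternating sum of Newtonian potentials at the vertices of a
regular 2m-gon is O(1/|x|^{m+1}) at infinity.  The paper's vertex z_j (j = 1,…,2m)
with charge (-1)^{j+1} is indexed here by i = j - 1 ∈ range (2m), with charge (-1)^i. -/
theorem stmt15 (m : ℕ) (hm : 1 ≤ m) (r₀ : ℝ) (hr : 0 < r₀)
    (z : ℕ → EuclideanSpace ℝ (Fin 3))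
    (hz : ∀ i : ℕ, z i = pt3 (r₀ * cos (π * i / m)) (r₀ * sin (π * i / m)) 0)
    (ψ : EuclideanSpace ℝ (Fin 3) → ℝ)
    (hψ : ∀ x, (∀ i ∈ Finset.range (2 * m), x ≠ z i) →
      ψ x = -(1 / (4 * π)) * ∑ i ∈ Finset.range (2 * m), ((-1 : ℝ)) ^ i / ‖x - z i‖) :
    ∃ C R : ℝ, ∀ x : EuclideanSpace ℝ (Fin 3), R ≤ ‖x‖ →
      |ψ x| ≤ C / ‖x‖ ^ (m + 1) := by
  refine ⟨2*m * 2^(m+1) * (2*r₀)^m, 4*r₀, ?_⟩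
  intro x hx
  have hR : 0 < ‖x‖ := lt_of_lt_of_le (by positivity) hx
  set R := ‖x‖ with hRdef
  set d : ℕ → ℝ := fun i => x 0 * Real.cos (π*i/m) + x 1 * Real.sin (π*i/m) with hd
  set A : ℝ := R^2 + r₀^2 with hA
  have hApos : 0 < A := by positivity
  -- norms of the vertices
  have hzn : ∀ i : ℕ, ‖z i‖ = r₀ := by
    intro i
    have h2 : ‖z i‖^2 = r₀^2 := by
      rw [hz i, EuclideanSpace.norm_eq, Real.sq_sqrt (by positivity)]
      simp [pt3, Fin.sum_univ_three]
      nlinarith [sin_sq_add_cos_sq (π*i/m)]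
    calc ‖z i‖ = √(‖z i‖^2) := (Real.sqrt_sq (norm_nonneg _)).symm
      _ = √(r₀^2) := by rw [h2]
      _ = r₀ := Real.sqrt_sq hr.le
  have hxz : ∀ i ∈ Finset.range (2*m), x ≠ z i := by
    intro i _ h
    have h1 : R = r₀ := by rw [hRdef, h]; exact hzn i
    nlinarith [hx]
  rw [hψ x hxz]
  have hinner : ∀ i : ℕ, (inner ℝ x (z i) : ℝ) = r₀ * d i := by
    intro i
    rw [hz i]
    simp [pt3, PiLp.inner_apply, Fin.sum_univ_three, RCLike.inner_apply, hd]
    ring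
  have hnormsub : ∀ i : ℕ, ‖x - z i‖^2 = A - 2*r₀*(d i) := by
    intro i
    rw [norm_sub_sq_real, hinner i, hzn i, hA, ← hRdef]
    ring
  have hxsq : R^2 = x 0^2 + x 1^2 + x 2^2 := by
    rw [hRdef, EuclideanSpace.norm_eq, Real.sq_sqrt (by positivity)]
    simp [Fin.sum_univ_three]
  have hdabs : ∀ i : ℕ, |d i| ≤ R := by
    intro i
    have h1 : (d i)^2 ≤ R^2 := by
      rw [hxsq, hd]
      nlinarith [sin_sq_add_cos_sq (π*i/m), sq_nonneg (x 0 * Real.sin (π*i/m) - x 1 * Real.cos (π*i/m)), sq_nonneg (x 2)]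
    calc |d i| = √((d i)^2) := (Real.sqrt_sq_eq_abs _).symm
      _ ≤ √(R^2) := Real.sqrt_le_sqrt h1
      _ = R := Real.sqrt_sq hR.le
  set u : ℕ → ℝ := fun i => 2*r₀*(d i)/A with hu
  have hu_le : ∀ i : ℕ, |u i| ≤ 2*r₀/R := by
    intro i
    rw [hu]
    rw [abs_div, abs_of_pos hApos, abs_mul, abs_of_pos (by positivity : (0:ℝ) < 2*r₀)]
    rw [div_le_div_iff₀ hApos hR]
    nlinarith [mul_nonneg (mul_nonneg (by positivity : (0:ℝ) ≤ 2*r₀) hR.le)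
      (sub_nonneg.mpr (hdabs i)), mul_nonneg hr.le (sq_nonneg r₀)]
  have h2rR : 2*r₀/R ≤ 1/2 := by
    rw [div_le_div_iff₀ hR (by norm_num : (0:ℝ) < 2)]
    nlinarith
  have hu_half : ∀ i : ℕ, |u i| ≤ 1/2 := fun i => le_trans (hu_le i) h2rR
  have h1upos : ∀ i : ℕ, (0:ℝ) < 1 - u i := by
    intro i
    have := abs_le.mp (hu_half i)
    linarith [this.2]
  -- key formula for the potential
  have hkey : ∀ i : ℕ, (1:ℝ)/‖x - z i‖ = (√A)⁻¹ * (1 - u i) ^ (-(1/2):ℝ) := by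
    intro i
    have hAu : ‖x - z i‖^2 = A * (1 - u i) := by
      rw [hnormsub i, hu]
      field_simp
    have hnorm : ‖x - z i‖ = √A * √(1 - u i) := by
      rw [← Real.sqrt_mul hApos.le, ← hAu, Real.sqrt_sq (norm_nonneg _)]
    rw [hnorm, one_div, mul_inv, Real.rpow_neg (h1upos i).le, ← Real.sqrt_eq_rpow]
  -- rewrite the sum
  rw [show ∀ S : ℝ, -(1/(4*π)) * S = -(1/(4*π)) * S from fun _ => rfl]
  have hsum : ∑ i ∈ Finset.range (2*m), (-1:ℝ)^i / ‖x - z i‖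
      = (√A)⁻¹ * ∑ i ∈ Finset.range (2*m), (-1:ℝ)^i * (1 - u i) ^ (-(1/2):ℝ) := by
    rw [Finset.mul_sum]
    refine Finset.sum_congr rfl fun i _ => ?_
    rw [div_eq_mul_one_div, hkey i]
    ring
  rw [hsum]
  -- vanishing of the Taylor polynomial part
  have hupow : ∀ i k : ℕ, (u i)^k = (2*r₀/A)^k * (d i)^k := by
    intro i k
    rw [← mul_pow]
    congr 1
    rw [hu]
    ring
  have hP : ∑ i ∈ Finset.range (2*m), (-1:ℝ)^i *
      (∑ k ∈ Finset.range m, cc k / (k.factorial : ℝ) * (u i)^k) = 0 := by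
    have step : ∀ i ∈ Finset.range (2*m), (-1:ℝ)^i *
        (∑ k ∈ Finset.range m, cc k / (k.factorial : ℝ) * (u i)^k)
        = ∑ k ∈ Finset.range m, (cc k / (k.factorial : ℝ) * (2*r₀/A)^k) * ((-1:ℝ)^i * (d i)^k) := by
      intro i _
      rw [Finset.mul_sum]
      refine Finset.sum_congr rfl fun k _ => ?_
      rw [hupow i k]
      ring
    rw [Finset.sum_congr rfl step, Finset.sum_comm]
    refine Finset.sum_eq_zero fun k hk => ?_
    rw [← Finset.mul_sum]
    have := moment_sum m hm (x 0) (x 1) k (Finset.mem_range.mp hk)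
    rw [hd]
    rw [show (fun i : ℕ => x 0 * Real.cos (π*i/m) + x 1 * Real.sin (π*i/m)) = fun i : ℕ => x 0 * Real.cos (π*i/m) + x 1 * Real.sin (π*i/m) from rfl]
    rw [this, mul_zero]
  -- bound the remainder sum
  set T := ∑ i ∈ Finset.range (2*m), (-1:ℝ)^i * (1 - u i) ^ (-(1/2):ℝ) with hT
  have hTbound : |T| ≤ 2*m * (2^(m+1) * (2*r₀/R)^m) := by
    have hsplit : T = ∑ i ∈ Finset.range (2*m), (-1:ℝ)^i *
        ((1 - u i) ^ (-(1/2):ℝ) - ∑ k ∈ Finset.range m, cc k / (k.factorial : ℝ) * (u i)^k) := by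
      rw [hT, ← sub_zero (∑ i ∈ Finset.range (2*m), (-1:ℝ)^i * (1 - u i) ^ (-(1/2):ℝ)), ← hP,
        ← Finset.sum_sub_distrib]
      exact Finset.sum_congr rfl fun i _ => by ring
    rw [hsplit]
    calc |∑ i ∈ Finset.range (2*m), (-1:ℝ)^i *
        ((1 - u i) ^ (-(1/2):ℝ) - ∑ k ∈ Finset.range m, cc k / (k.factorial : ℝ) * (u i)^k)|
        ≤ ∑ i ∈ Finset.range (2*m), |(-1:ℝ)^i *
          ((1 - u i) ^ (-(1/2):ℝ) - ∑ k ∈ Finset.range m, cc k / (k.factorial : ℝ) * (u i)^k)| :=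
        Finset.abs_sum_le_sum_abs _ _
      _ ≤ ∑ _i ∈ Finset.range (2*m), 2^(m+1) * (2*r₀/R)^m := by
        refine Finset.sum_le_sum fun i _ => ?_
        rw [abs_mul, abs_pow, abs_neg, abs_one, one_pow, one_mul]
        calc |(1 - u i) ^ (-(1/2):ℝ) - ∑ k ∈ Finset.range m, cc k / (k.factorial : ℝ) * (u i)^k|
            ≤ 2^(m+1) * |u i|^m := taylor_bound m hm (u i) (hu_half i)
          _ ≤ 2^(m+1) * (2*r₀/R)^m := by
            have h1 : |u i|^m ≤ (2*r₀/R)^m := pow_le_pow_left₀ (abs_nonneg _) (hu_le i) m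
            nlinarith [pow_pos (show (0:ℝ) < 2 by norm_num) (m+1)]
      _ = 2*m * (2^(m+1) * (2*r₀/R)^m) := by
        rw [Finset.sum_const, Finset.card_range]
        push_cast
        ring
  -- final estimate
  have hsqrtA : R ≤ √A := by
    calc R = √(R^2) := (Real.sqrt_sq hR.le).symm
      _ ≤ √A := Real.sqrt_le_sqrt (by nlinarith)
  have hsqrtApos : 0 < √A := lt_of_lt_of_le hR hsqrtA
  have hinvA : (√A)⁻¹ ≤ R⁻¹ := by
    exact inv_anti₀ hR hsqrtA
  have hπ : (1:ℝ)/(4*π) ≤ 1 := by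
    have := Real.pi_gt_three
    rw [div_le_one (by positivity)]
    linarith
  have hπpos : (0:ℝ) < 1/(4*π) := by positivity
  rw [abs_mul, abs_neg, abs_of_pos hπpos, abs_mul, abs_of_pos (inv_pos.mpr hsqrtApos)]
  have h1 : (√A)⁻¹ * |T| ≤ R⁻¹ * (2*m * (2^(m+1) * (2*r₀/R)^m)) :=
    mul_le_mul hinvA hTbound (abs_nonneg _) (inv_pos.mpr hR).le
  have h2 : (0:ℝ) ≤ (√A)⁻¹ * |T| := by positivity
  have h3 : 1/(4*π) * ((√A)⁻¹ * |T|) ≤ 1 * (R⁻¹ * (2*m * (2^(m+1) * (2*r₀/R)^m))) :=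
    mul_le_mul hπ h1 h2 (by norm_num)
  have h4 : 1 * (R⁻¹ * (2*(m:ℝ) * (2^(m+1) * (2*r₀/R)^m))) = 2*m * 2^(m+1) * (2*r₀)^m / R^(m+1) := by
    rw [one_mul, div_pow, pow_succ]
    ring
  rw [h4] at h3
  exact h3
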